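/- Let E be a finite-dimensional real inner product space, let C : ℝ → E be real-analytic on a neighborhood of 0 with C(0) = 0 and C not identically zero on any neighborhood of 0, and let ε > 0. Then there exists δ > 0 such that for all s ∈ (0, δ): ⟪C(s), C′(s)⟫ > 0 and ‖C(s)‖²·‖C′(s)‖² − ⟪C(s), C′(s)⟫² < ε² · ⟪C(s), C′(s)⟫². -/

import Mathlib

/-- Quantitative form of the contradiction via the curve selection lemma: along a
nontrivial real-analytic curve through the origin, for all small `s > 0` the squared
tangent of the angle between `C(s)` and `C′(s)` is `< ε²`. -/
theorem analytic_curve_tangent_squared_lt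
    {E : Type*} [NormedAddCommGroup E] [InnerProductSpace ℝ E] [FiniteDimensional ℝ E]
    (C : ℝ → E) (hC : AnalyticAt ℝ C 0) (h0 : C 0 = 0)
    (hnz : ¬ ∀ᶠ s in nhds (0 : ℝ), C s = 0) (ε : ℝ) (hε : 0 < ε) :
    ∃ δ > 0, ∀ s ∈ Set.Ioo (0 : ℝ) δ,
      (0 : ℝ) < inner ℝ (C s) (deriv C s) ∧
      ‖C s‖ ^ 2 * ‖deriv C s‖ ^ 2 - (inner ℝ (C s) (deriv C s) : ℝ) ^ 2 <
        ε ^ 2 * (inner ℝ (C s) (deriv C s) : ℝ) ^ 2 := by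
  -- The order of vanishing of `C` at `0` is a finite natural number `n = m + 1`.
  have hne : analyticOrderAt C 0 ≠ ⊤ := fun h => hnz (analyticOrderAt_eq_top.mp h)
  obtain ⟨n, hn⟩ := WithTop.ne_top_iff_exists.mp hne
  obtain ⟨g, hg, hg0, hfg⟩ := (hC.analyticOrderAt_eq_natCast (n := n)).mp hn.symm
  simp only [sub_zero] at hfg
  obtain ⟨m, rfl⟩ : ∃ m, n = m + 1 := by
    rcases n with _ | m
    · exfalso
      have h := hfg.self_of_nhds
      simp only [pow_zero, one_smul, h0] at h
      exact hg0 h.symm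
    · exact ⟨m, rfl⟩
  -- the auxiliary vector field `v`
  set v : ℝ → E := fun s => ((m : ℝ) + 1) • g s + s • deriv g s with hv
  -- near 0, `deriv C s = s ^ m • v s`
  have hGdiff : ∀ᶠ s in nhds (0 : ℝ), DifferentiableAt ℝ g s :=
    hg.eventually_analyticAt.mono fun s hs => hs.differentiableAt
  have hfg' : C =ᶠ[nhds (0 : ℝ)] fun z => z ^ (m + 1) • g z := hfg
  have hderiv : ∀ᶠ s in nhds (0 : ℝ), deriv C s = s ^ m • v s := by
    filter_upwards [hfg'.deriv, hGdiff] with s hs hds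
    rw [hs]
    have h1 : HasDerivAt (fun t : ℝ => t ^ (m + 1) • g t)
        ((((m : ℝ) + 1) * s ^ m) • g s + s ^ (m + 1) • deriv g s) s := by
      have := (hasDerivAt_pow (m + 1) s).smul hds.hasDerivAt
      convert this using 1
      · rfl
      · simp [Nat.cast_add, add_comm]
    rw [h1.deriv, hv]
    simp only [smul_add, smul_smul]
    rw [pow_succ]
    ring_nf
  -- continuity of the relevant scalar functions at 0
  have hgc : ContinuousAt g 0 := hg.continuousAt
  have hdc : ContinuousAt (deriv g) 0 := by
    have h1 : ContinuousAt (fderiv ℝ g) 0 := hg.fderiv.continuousAt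
    have h2 : ContinuousAt (fun s => fderiv ℝ g s (1 : ℝ)) 0 :=
      ((ContinuousLinearMap.apply ℝ E (1 : ℝ)).continuous.continuousAt).comp h1
    have : (deriv g) = fun s => fderiv ℝ g s (1 : ℝ) := by
      funext s; exact (fderiv_apply_one_eq_deriv).symm
    rw [this]; exact h2
  have hvc : ContinuousAt v 0 := by
    apply ContinuousAt.add
    · exact hgc.const_smul _
    · exact continuousAt_id.smul hdc
  have hφc : ContinuousAt (fun s => (inner ℝ (g s) (v s) : ℝ)) 0 := hgc.inner hvc
  have hψc : ContinuousAt (fun s =>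
      ‖g s‖ ^ 2 * ‖v s‖ ^ 2 - (1 + ε ^ 2) * (inner ℝ (g s) (v s) : ℝ) ^ 2) 0 := by
    fun_prop
  -- values at 0
  have hv0 : v 0 = ((m : ℝ) + 1) • g 0 := by simp [hv]
  have hφ0 : (inner ℝ (g 0) (v 0) : ℝ) = ((m : ℝ) + 1) * ‖g 0‖ ^ 2 := by
    rw [hv0, real_inner_smul_right, real_inner_self_eq_norm_sq]
  have hng : 0 < ‖g 0‖ := norm_pos_iff.mpr hg0
  have hm1 : (0 : ℝ) < (m : ℝ) + 1 := by positivity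
  have hφ0pos : 0 < (inner ℝ (g 0) (v 0) : ℝ) := by
    rw [hφ0]; positivity
  have hψ0neg : ‖g 0‖ ^ 2 * ‖v 0‖ ^ 2 - (1 + ε ^ 2) * (inner ℝ (g 0) (v 0) : ℝ) ^ 2 < 0 := by
    have hnv0 : ‖v 0‖ = ((m : ℝ) + 1) * ‖g 0‖ := by
      rw [hv0, norm_smul, Real.norm_eq_abs, abs_of_pos hm1]
    rw [hφ0, hnv0]
    have : ‖g 0‖ ^ 2 * (((m : ℝ) + 1) * ‖g 0‖) ^ 2
        - (1 + ε ^ 2) * (((m : ℝ) + 1) * ‖g 0‖ ^ 2) ^ 2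
        = -(ε ^ 2 * ((m : ℝ) + 1) ^ 2 * ‖g 0‖ ^ 4) := by ring
    rw [this]
    have hpos : 0 < ε ^ 2 * ((m : ℝ) + 1) ^ 2 * ‖g 0‖ ^ 4 := by positivity
    linarith
  -- eventual positivity / negativity
  have h1 : ∀ᶠ s in nhds (0 : ℝ), 0 < (inner ℝ (g s) (v s) : ℝ) :=
    hφc.eventually (eventually_gt_nhds hφ0pos)
  have h2 : ∀ᶠ s in nhds (0 : ℝ),
      ‖g s‖ ^ 2 * ‖v s‖ ^ 2 - (1 + ε ^ 2) * (inner ℝ (g s) (v s) : ℝ) ^ 2 < 0 :=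
    hψc.eventually (eventually_lt_nhds hψ0neg)
  -- choose δ
  have hall := hfg.and (hderiv.and (h1.and h2))
  rw [Metric.eventually_nhds_iff] at hall
  obtain ⟨δ, hδ, hball⟩ := hall
  refine ⟨δ, hδ, fun s hs => ?_⟩
  obtain ⟨hs0, hsδ⟩ := hs
  have hdist : dist s 0 < δ := by
    rw [Real.dist_eq, sub_zero, abs_of_pos hs0]; exact hsδ
  obtain ⟨hCs, hDs, hP, hQ⟩ := hball hdist
  have htm : (0 : ℝ) < s ^ m := pow_pos hs0 m
  have hsm1 : (0 : ℝ) < s ^ (m + 1) := pow_pos hs0 (m + 1)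
  constructor
  · rw [hCs, hDs, real_inner_smul_left, real_inner_smul_right]
    exact mul_pos hsm1 (mul_pos htm hP)
  · rw [hCs, hDs, real_inner_smul_left, real_inner_smul_right,
      norm_smul, norm_smul, Real.norm_eq_abs, Real.norm_eq_abs,
      abs_of_pos hsm1, abs_of_pos htm]
    have hc : (0 : ℝ) < (s ^ (m + 1) * s ^ m) ^ 2 := by positivity
    have hkey := mul_neg_of_pos_of_neg hc hQ
    nlinarith [hkey]
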